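/- For a word v with |v| divisible by d, suppose π_d(v) divides |y|, |y| divides d, and xyz belongs to the ⊑_d-downward closure of {vᵏw : k ≥ 0} where w is the length-r prefix of v. Then for every ℓ ∈ ℕ, the word x y^{1 + ℓ·d/|y|} z also belongs to this downward closure. -/

import Mathlib

/-- `kappa d w i` is the set of letters occurring in `w` at (1-based) positions
congruent to `i` modulo `d`. -/
def kappa {A : Type*} (d : ℕ) (w : List A) (i : ℕ) : Set A :=
  {a | ∃ p : ℕ, w[p]? = some a ∧ (p + 1) % d = i % d}

/-- `ModEmb d u v` : `u` embeds into `v` by a strictly monotone, letter-preserving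
map that preserves positions modulo `d`, and `|u| ≡ |v| (mod d)`. -/
def ModEmb {A : Type*} (d : ℕ) (u v : List A) : Prop :=
  u.length % d = v.length % d ∧
    ∃ α : Fin u.length → Fin v.length, StrictMono α ∧
      (∀ i, u.get i = v.get (α i)) ∧
      (∀ i : Fin u.length, ((α i : ℕ)) % d = ((i : ℕ)) % d)

/-- Downward closure of a set of words with respect to `ModEmb d`. -/
def dclMod {A : Type*} (d : ℕ) (S : Set (List A)) : Set (List A) :=
  {u | ∃ v ∈ S, ModEmb d u v}

/-- The `k`-th power of a word. -/
def wpow {A : Type*} (v : List A) (k : ℕ) : List A :=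
  (List.replicate k v).flatten

/-- `π_d(v)`: the smallest `t ≥ 1` dividing `d` such that
`κ_d(v)(i + t) = κ_d(v)(i)` for all `i ∈ [1, d - t]`. -/
noncomputable def piD {A : Type*} (d : ℕ) (v : List A) : ℕ :=
  sInf {t | t ∣ d ∧ 1 ≤ t ∧ ∀ i : ℕ, 1 ≤ i → i + t ≤ d →
    kappa d v (i + t) = kappa d v i}

lemma getq_eq_get {A : Type*} {l : List A} {n : ℕ} (h : n < l.length) :
    l[n]? = some (l.get ⟨n, h⟩) := by simp

lemma wpow_length {A : Type*} (v : List A) (k : ℕ) : (wpow v k).length = k * v.length := by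
  simp [wpow, List.length_flatten, Function.comp]

lemma wpow_succ {A : Type*} (v : List A) (k : ℕ) : wpow v (k+1) = v ++ wpow v k := by
  simp [wpow, List.replicate_succ]

lemma wpow_get? {A : Type*} (v : List A) : ∀ (k q : ℕ), q < k * v.length →
    (wpow v k)[q]? = v[q % v.length]? := by
  intro k
  induction k with
  | zero => intro q hq; simp at hq
  | succ k ih =>
    intro q hq
    have hmul : (k+1) * v.length = k * v.length + v.length := by ring
    rw [wpow_succ]
    rcases lt_or_ge q v.length with h | h
    · rw [List.getElem?_append_left h, Nat.mod_eq_of_lt h]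
    · rw [List.getElem?_append_right h, ih (q - v.length) (by omega)]
      congr 1
      conv_rhs => rw [show q = q - v.length + v.length by omega]
      rw [Nat.add_mod_right]

lemma kappa_mod_eq {A : Type*} (d : ℕ) (v : List A) {i j : ℕ} (h : i % d = j % d) :
    kappa d v i = kappa d v j := by
  unfold kappa; ext a; simp only [Set.mem_setOf_eq, h]

lemma kappa_period {A : Type*} (d : ℕ) (v : List A) (p : ℕ) (hp1 : 1 ≤ p) (hpd : p ∣ d)
    (hd : 1 ≤ d)
    (hstep : ∀ i, 1 ≤ i → i + p ≤ d → kappa d v (i + p) = kappa d v i) (m : ℕ) :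
    kappa d v (m + p) = kappa d v m := by
  have hpled : p ≤ d := Nat.le_of_dvd (by omega) hpd
  have chain : ∀ t j, 1 ≤ j → j + t * p ≤ d → kappa d v (j + t * p) = kappa d v j := by
    intro t
    induction t with
    | zero => intro j _ _; simp
    | succ t ih =>
      intro j hj hle
      have h1 : j + t * p + p ≤ d := by
        have : (t+1) * p = t * p + p := by ring
        omega
      have := hstep (j + t * p) (by omega) h1
      calc kappa d v (j + (t+1) * p) = kappa d v (j + t * p + p) := by
            congr 1; ring
        _ = kappa d v (j + t * p) := this
        _ = kappa d v j := ih j hj (by omega)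
  set i' : ℕ := if m % d = 0 then d else m % d with hi'
  have hi'1 : 1 ≤ i' := by
    rw [hi']; split <;> [omega; omega]
  have hi'd : i' ≤ d := by
    have := Nat.mod_lt m (show 0 < d by omega)
    rw [hi']; split <;> omega
  have hi'm : i' % d = m % d := by
    rw [hi']; split
    · simp_all [Nat.mod_self]
    · exact Nat.mod_mod_of_dvd m (dvd_refl d)
  have hmm : kappa d v m = kappa d v i' := kappa_mod_eq d v hi'm.symm
  have hmp : kappa d v (m + p) = kappa d v (i' + p) := by
    apply kappa_mod_eq
    have h1 : (m + p) % d = (m % d + p % d) % d := Nat.add_mod m p d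
    have h2 : (i' + p) % d = (i' % d + p % d) % d := Nat.add_mod i' p d
    rw [h1, h2, hi'm]
  rcases le_or_gt (i' + p) d with hle | hlt
  · rw [hmp, hmm, hstep i' hi'1 hle]
  · obtain ⟨e, he⟩ := hpd
    have he1 : 1 ≤ e := by
      rcases Nat.eq_zero_or_pos e with h0 | h0
      · subst h0; simp at he; omega
      · exact h0
    set j := i' + p - d with hj
    have hj1 : 1 ≤ j := by omega
    have hjp : j ≤ p := by omega
    have hwrap : (i' + p) % d = j % d := by
      have h5 : i' + p = d + j := by omega
      rw [h5, Nat.add_mod_left]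
    have h1 : kappa d v (m + p) = kappa d v j := by
      rw [hmp]; exact kappa_mod_eq d v hwrap
    have h3 : (e - 1) * p + p = e * p := by
      cases e with
      | zero => omega
      | succ e' => simp [Nat.succ_sub_one]; ring
    have h4 : e * p = d := by rw [he]; ring
    have hi'eq : i' = j + (e - 1) * p := by omega
    have h2 : kappa d v i' = kappa d v j := by
      rw [hi'eq]
      exact chain (e-1) j hj1 (by omega)
    rw [h1, hmm, h2]

lemma kappa_period_mul {A : Type*} (d : ℕ) (v : List A) (p : ℕ) (hp1 : 1 ≤ p) (hpd : p ∣ d)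
    (hd : 1 ≤ d)
    (hstep : ∀ i, 1 ≤ i → i + p ≤ d → kappa d v (i + p) = kappa d v i) (t m : ℕ) :
    kappa d v (m + t * p) = kappa d v m := by
  induction t with
  | zero => simp
  | succ t ih =>
    calc kappa d v (m + (t+1) * p) = kappa d v ((m + t * p) + p) := by congr 1; ring
      _ = kappa d v (m + t * p) := kappa_period d v p hp1 hpd hd hstep _
      _ = kappa d v m := ih

theorem pump_inside_ideal_ext {A : Type*} (d : ℕ) (hd : 1 ≤ d)
    (r : ℕ) (hr : r < d) (v x y z : List A) (hv : d ∣ v.length)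
    (hy : y ≠ []) (hper : piD d v ∣ y.length) (hdiv : y.length ∣ d)
    (hxyz : x ++ y ++ z ∈ dclMod d {u | ∃ k : ℕ, u = wpow v k ++ v.take r}) :
    ∀ l : ℕ,
      x ++ wpow y (1 + l * (d / y.length)) ++ z ∈
        dclMod d {u | ∃ k : ℕ, u = wpow v k ++ v.take r} := by
  intro l
  obtain ⟨t, ⟨k, rfl⟩, hlen, α, hmono, hget, hres⟩ := hxyz
  have hs : 0 < y.length := List.length_pos_iff.mpr hy
  have hsrc : (x ++ y ++ z).length = x.length + y.length + z.length := by
    simp [List.length_append]; omega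
  by_cases hv0 : v = []
  · exfalso
    subst hv0
    have h1 : (wpow ([] : List A) k ++ List.take r []).length = 0 := by
      simp [wpow_length]
    have h2 : 0 < (x ++ y ++ z).length := by rw [hsrc]; omega
    exact absurd (lt_of_lt_of_eq (α ⟨0, h2⟩).isLt h1) (Nat.not_lt_zero _)
  have hnpos : 0 < v.length := List.length_pos_iff.mpr hv0
  have hdle : d ≤ v.length := Nat.le_of_dvd hnpos hv
  have hrn : r < v.length := lt_of_lt_of_le hr hdle
  -- piD facts
  have hpiD : piD d v ∈ {t | t ∣ d ∧ 1 ≤ t ∧ ∀ i : ℕ, 1 ≤ i → i + t ≤ d →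
      kappa d v (i + t) = kappa d v i} :=
    Nat.sInf_mem ⟨d, dvd_refl d, hd, fun i h1 h2 => absurd h2 (by omega)⟩
  obtain ⟨hpd, hp1, hpstep⟩ := hpiD
  have hκ : ∀ t m : ℕ, kappa d v (m + t * piD d v) = kappa d v m :=
    fun t m => kappa_period_mul d v (piD d v) hp1 hpd hd hpstep t m
  -- target length & get facts
  have htake : (v.take r).length = r := by
    simp [List.length_take]; omega
  have htlen : ∀ K : ℕ, (wpow v K ++ v.take r).length = K * v.length + r := by
    intro K; simp [List.length_append, wpow_length, htake]
  have htget : ∀ (K q : ℕ), q < K * v.length + r →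
      (wpow v K ++ v.take r)[q]? = v[q % v.length]? := by
    intro K q hq
    rcases lt_or_ge q (K * v.length) with h | h
    · rw [List.getElem?_append_left (by rw [wpow_length]; exact h), wpow_get? v K q h]
    · have hq2 : q - K * v.length < r := by omega
      rw [List.getElem?_append_right (by rw [wpow_length]; exact h), wpow_length,
        List.getElem?_take_of_lt hq2]
      congr 1
      have h5 : q % v.length = (q - K * v.length) % v.length := by
        conv_lhs => rw [show q = q - K * v.length + K * v.length by omega]
        rw [Nat.add_mul_mod_self_right]
      rw [h5, Nat.mod_eq_of_lt (by omega)]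
  -- F : ℕ-valued version of α
  set F : ℕ → ℕ := fun i =>
    if h : i < (x ++ y ++ z).length then (α ⟨i, h⟩ : ℕ) else 0 with hF
  have hFval : ∀ (i : ℕ) (h : i < (x ++ y ++ z).length), F i = (α ⟨i, h⟩ : ℕ) := by
    intro i h; simp only [hF]; exact dif_pos h
  have hFmono : ∀ i j : ℕ, i < j → j < x.length + y.length + z.length → F i < F j := by
    intro i j hij hj
    have hj' : j < (x ++ y ++ z).length := by rw [hsrc]; exact hj
    have hi' : i < (x ++ y ++ z).length := by omega
    rw [hFval i hi', hFval j hj']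
    exact hmono (show (⟨i, hi'⟩ : Fin _) < ⟨j, hj'⟩ from hij)
  have hFbound : ∀ i : ℕ, i < x.length + y.length + z.length → F i < k * v.length + r := by
    intro i hi
    have hi' : i < (x ++ y ++ z).length := by rw [hsrc]; exact hi
    rw [hFval i hi']
    have := (α ⟨i, hi'⟩).isLt
    have h9 := htlen k
    omega
  have hFres : ∀ i : ℕ, i < x.length + y.length + z.length → F i % d = i % d := by
    intro i hi
    have hi' : i < (x ++ y ++ z).length := by rw [hsrc]; exact hi
    rw [hFval i hi']
    exact hres ⟨i, hi'⟩
  have hFget : ∀ i : ℕ, (hi : i < x.length + y.length + z.length) →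
      (x ++ y ++ z)[i]? = v[F i % v.length]? := by
    intro i hi
    have hi' : i < (x ++ y ++ z).length := by rw [hsrc]; exact hi
    rw [getq_eq_get hi', hFval i hi']
    have h2 := getq_eq_get (α ⟨i, hi'⟩).isLt
    rw [Fin.eta] at h2
    rw [← htget k _ (by rw [← htlen k]; exact (α ⟨i, hi'⟩).isLt), h2, hget ⟨i, hi'⟩]
  -- abbreviations
  set N := 1 + l * (d / y.length) with hN
  set S' := N * y.length with hS'def
  have hds : d / y.length * y.length = d := Nat.div_mul_cancel hdiv
  have hS' : S' = y.length + l * d := by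
    rw [hS'def, hN]
    calc (1 + l * (d / y.length)) * y.length
        = y.length + l * (d / y.length * y.length) := by ring
      _ = y.length + l * d := by rw [hds]
  have hS'pos : 1 ≤ S' := by omega
  -- selection of positions inside v for the pumped copies of y
  have Hsel : ∀ c : ℕ, ∃ mc : ℕ, c < S' →
      mc < v.length ∧ v[mc]? = y[c % y.length]? ∧
      (mc + 1) % d = (x.length + c + 1) % d := by
    intro c
    by_cases hc : c < S'
    swap
    · exact ⟨0, fun h => absurd h hc⟩
    have hi0 : c % y.length < y.length := Nat.mod_lt _ hs
    set i0 := c % y.length with hi0def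
    have hpos : x.length + i0 < x.length + y.length + z.length := by omega
    have hposl : x.length + i0 < (x ++ y ++ z).length := by rw [hsrc]; omega
    -- the letter
    have hsome : (x ++ y ++ z)[x.length + i0]? = y[i0]? := by
      rw [List.getElem?_append_left (by simp [List.length_append]; omega),
        List.getElem?_append_right (by omega)]
      congr 1; omega
    have hlet : v[F (x.length + i0) % v.length]? = y[i0]? := by
      rw [← hFget _ hpos, hsome]
    -- residue of the witness
    have hm0res : (F (x.length + i0) % v.length + 1) % d = (x.length + i0 + 1) % d := by
      have h1 : F (x.length + i0) % v.length % d = F (x.length + i0) % d :=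
        Nat.mod_mod_of_dvd _ hv
      have h2 := hFres _ hpos
      have h3 : F (x.length + i0) % v.length ≡ x.length + i0 [MOD d] := by
        unfold Nat.ModEq; omega
      exact Nat.ModEq.add_right 1 h3
    -- the letter lies in kappa at the shifted residue
    obtain ⟨a, ha⟩ : ∃ a, y[i0]? = some a :=
      ⟨y.get ⟨i0, hi0⟩, getq_eq_get hi0⟩
    have hmem : a ∈ kappa d v (x.length + i0 + 1) :=
      ⟨F (x.length + i0) % v.length, by rw [hlet, ha], hm0res⟩
    have hps : y.length / piD d v * piD d v = y.length := Nat.div_mul_cancel hper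
    have hcs : x.length + c + 1 =
        (x.length + i0 + 1) + (c / y.length * (y.length / piD d v)) * piD d v := by
      have h3 : (c / y.length * (y.length / piD d v)) * piD d v
          = c / y.length * y.length := by rw [mul_assoc, hps]
      have h2 : c / y.length * y.length + c % y.length = c := Nat.div_add_mod' c y.length
      omega
    have hkap : kappa d v (x.length + c + 1) = kappa d v (x.length + i0 + 1) := by
      rw [hcs]; exact hκ _ _
    rw [← hkap] at hmem
    obtain ⟨mc, hmc1, hmc2⟩ := hmem
    obtain ⟨hlt, -⟩ := List.getElem?_eq_some_iff.mp hmc1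
    exact ⟨mc, fun _ => ⟨hlt, by rw [hmc1, ha], hmc2⟩⟩
  choose m hm using Hsel
  -- insertion boundary B
  set B : ℕ := if x.length = 0 then 0
    else (F (x.length - 1) / v.length + 1) * v.length with hB
  have hBdvd : v.length ∣ B := by
    rw [hB]; split
    · exact dvd_zero _
    · exact Dvd.intro_left _ rfl
  have hBx : ∀ i : ℕ, i < x.length → F i < B := by
    intro i hi
    have hx0 : x.length ≠ 0 := by omega
    rw [hB, if_neg hx0]
    have hle : F i ≤ F (x.length - 1) := by
      rcases eq_or_lt_of_le (show i ≤ x.length - 1 by omega) with h | h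
      · rw [h]
      · exact le_of_lt (hFmono i (x.length - 1) h (by omega))
    have hdm := Nat.div_add_mod (F (x.length - 1)) v.length
    have hml := Nat.mod_lt (F (x.length - 1)) hnpos
    have hexp : (F (x.length - 1) / v.length + 1) * v.length
        = v.length * (F (x.length - 1) / v.length) + v.length := by ring
    omega
  have hBle : B ≤ (k + 1) * v.length := by
    rw [hB]; split
    · omega
    · have hb := hFbound (x.length - 1) (by omega)
      have hlt : F (x.length - 1) < (k + 1) * v.length := by
        have : (k+1) * v.length = k * v.length + v.length := by ring
        omega
      have hdiv' : F (x.length - 1) / v.length < k + 1 :=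
        Nat.div_lt_iff_lt_mul hnpos |>.mpr (by omega)
      exact Nat.mul_le_mul_right _ (by omega)
  have hBgt : x.length ≠ 0 → B ≤ F (x.length - 1) + v.length := by
    intro hx0
    rw [hB, if_neg hx0]
    have hdm := Nat.div_add_mod (F (x.length - 1)) v.length
    have hexp : (F (x.length - 1) / v.length + 1) * v.length
        = v.length * (F (x.length - 1) / v.length) + v.length := by ring
    omega
  set M := S' + 1 with hM
  set K' := k + 1 + M with hK'
  have hK'n : K' * v.length = (k + 1) * v.length + S' * v.length + v.length := by
    rw [hK', hM]; ring
  -- the new embedding, as a function on ℕ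
  set β : ℕ → ℕ := fun i =>
    if i < x.length then F i
    else if i < x.length + S' then B + (i - x.length) * v.length + m (i - x.length)
    else F (i - l * d) + M * v.length with hβ
  have hβ1 : ∀ i, i < x.length → β i = F i := by
    intro i hi; rw [hβ]; simp only [if_pos hi]
  have hβ2 : ∀ i, x.length ≤ i → i < x.length + S' →
      β i = B + (i - x.length) * v.length + m (i - x.length) := by
    intro i hi1 hi2; rw [hβ]
    simp only [if_neg (by omega : ¬ i < x.length), if_pos hi2]
  have hβ3 : ∀ i, x.length + S' ≤ i → β i = F (i - l * d) + M * v.length := by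
    intro i hi; rw [hβ]
    simp only [if_neg (by omega : ¬ i < x.length),
      if_neg (by omega : ¬ i < x.length + S')]
  -- bounds on β
  have hyub : ∀ i, x.length ≤ i → i < x.length + S' → β i < B + S' * v.length := by
    intro i hi1 hi2
    rw [hβ2 i hi1 hi2]
    have hmc := (hm (i - x.length) (by omega)).1
    have h1 : (i - x.length + 1) * v.length ≤ S' * v.length :=
      Nat.mul_le_mul_right _ (by omega)
    have h2 : (i - x.length + 1) * v.length = (i - x.length) * v.length + v.length := by
      ring
    omega
  have hβbound : ∀ i, i < x.length + S' + z.length → β i < K' * v.length + r := by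
    intro i hi
    rcases lt_or_ge i x.length with h1 | h1
    · rw [hβ1 i h1]
      have := hFbound i (by omega)
      have h2 : k * v.length ≤ K' * v.length := Nat.mul_le_mul_right _ (by omega)
      omega
    rcases lt_or_ge i (x.length + S') with h2 | h2
    · have := hyub i h1 h2
      omega
    · rw [hβ3 i h2]
      have hzi : i - l * d < x.length + y.length + z.length := by omega
      have := hFbound _ hzi
      have h3 : M * v.length = S' * v.length + v.length := by rw [hM]; ring
      have h5 : (k + 1) * v.length = k * v.length + v.length := by ring
      omega
  -- strict monotonicity of β
  have hβmono : ∀ i j, i < j → j < x.length + S' + z.length → β i < β j := by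
    intro i j hij hj
    have hzlb : ∀ jj, x.length + S' ≤ jj → jj < x.length + S' + z.length →
        B + S' * v.length < β jj := by
      intro jj hjj1 hjj2
      rw [hβ3 jj hjj1]
      have hjz : jj - l * d < x.length + y.length + z.length := by omega
      have hjz2 : x.length + y.length ≤ jj - l * d := by omega
      have h3 : M * v.length = S' * v.length + v.length := by rw [hM]; ring
      by_cases hx0 : x.length = 0
      · have hB0 : B = 0 := by rw [hB, if_pos hx0]
        omega
      · have h4 := hBgt hx0
        have h5 : F (x.length - 1) < F (jj - l * d) :=
          hFmono _ _ (by omega) hjz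
        omega
    rcases lt_or_ge j x.length with hj1 | hj1
    · rw [hβ1 i (by omega), hβ1 j hj1]
      exact hFmono i j hij (by omega)
    rcases lt_or_ge j (x.length + S') with hj2 | hj2
    · -- j in the y-block
      rw [hβ2 j hj1 hj2]
      rcases lt_or_ge i x.length with hi1 | hi1
      · rw [hβ1 i hi1]
        have := hBx i hi1
        omega
      · rw [hβ2 i hi1 (by omega)]
        have hmi := (hm (i - x.length) (by omega)).1
        have hstep : (i - x.length + 1) * v.length ≤ (j - x.length) * v.length :=
          Nat.mul_le_mul_right _ (by omega)
        have hexp : (i - x.length + 1) * v.length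
            = (i - x.length) * v.length + v.length := by ring
        omega
    · -- j in the z-block
      have hz := hzlb j hj2 hj
      rcases lt_or_ge i x.length with hi1 | hi1
      · rw [hβ1 i hi1]
        have := hBx i hi1
        omega
      rcases lt_or_ge i (x.length + S') with hi2 | hi2
      · have := hyub i hi1 hi2
        omega
      · rw [hβ3 i hi2, hβ3 j hj2]
        have h5 : F (i - l * d) < F (j - l * d) :=
          hFmono _ _ (by omega) (by omega)
        omega
  -- residues of β
  have hβres : ∀ i, i < x.length + S' + z.length → β i % d = i % d := by
    intro i hi
    rcases lt_or_ge i x.length with h1 | h1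
    · rw [hβ1 i h1]
      exact hFres i (by omega)
    rcases lt_or_ge i (x.length + S') with h2 | h2
    · rw [hβ2 i h1 h2]
      have hdB : d ∣ B + (i - x.length) * v.length :=
        dvd_add (dvd_trans hv hBdvd) (Dvd.dvd.mul_left hv _)
      obtain ⟨e, he⟩ := hdB
      have hrw : B + (i - x.length) * v.length + m (i - x.length)
          = d * e + m (i - x.length) := by omega
      rw [hrw, Nat.mul_add_mod]
      -- m (i-x.length) % d = i % d
      have hmr := (hm (i - x.length) (by omega)).2.2
      have hcancel : m (i - x.length) ≡ x.length + (i - x.length) [MOD d] :=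
        Nat.ModEq.add_right_cancel' 1 hmr
      have : m (i - x.length) % d = (x.length + (i - x.length)) % d := hcancel
      rw [this]
      congr 1
      omega
    · rw [hβ3 i h2]
      obtain ⟨c0, hc0⟩ := hv
      have hrw : F (i - l * d) + M * v.length = F (i - l * d) + (M * c0) * d := by
        rw [hc0]; ring
      rw [hrw, Nat.add_mul_mod_self_right]
      have h3 := hFres (i - l * d) (by omega)
      rw [h3]
      conv_rhs => rw [show i = (i - l * d) + l * d by omega]
      rw [Nat.add_mul_mod_self_right]
  -- letters of β
  have hmidlen : (x ++ wpow y N).length = x.length + S' := by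
    simp [List.length_append, wpow_length, hS'def]
  have hβget : ∀ i, (hi : i < x.length + S' + z.length) →
      (x ++ wpow y N ++ z)[i]? = (wpow v K' ++ v.take r)[β i]? := by
    intro i hi
    rw [htget K' (β i) (hβbound i hi)]
    rcases lt_or_ge i x.length with h1 | h1
    · rw [hβ1 i h1]
      have hli : (x ++ wpow y N ++ z)[i]? = x[i]? := by
        rw [List.getElem?_append_left (by rw [hmidlen]; omega), List.getElem?_append_left (by omega)]
      have hri : (x ++ y ++ z)[i]? = x[i]? := by
        rw [List.getElem?_append_left (by simp [List.length_append]; omega),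
          List.getElem?_append_left (by omega)]
      rw [hli, ← hri, hFget i (by omega)]
    rcases lt_or_ge i (x.length + S') with h2 | h2
    · rw [hβ2 i h1 h2]
      have hli : (x ++ wpow y N ++ z)[i]? = y[(i - x.length) % y.length]? := by
        rw [List.getElem?_append_left (by rw [hmidlen]; omega),
          List.getElem?_append_right (by omega),
          wpow_get? y N _ (by rw [← hS'def]; omega)]
      rw [hli]
      -- right side reduces to v[m (i - x.length)]?
      have hnB : v.length ∣ B + (i - x.length) * v.length :=
        dvd_add hBdvd (Dvd.intro_left _ rfl)
      obtain ⟨e, he⟩ := hnB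
      have hmc := hm (i - x.length) (by omega)
      have hrw : B + (i - x.length) * v.length + m (i - x.length)
          = v.length * e + m (i - x.length) := by omega
      rw [hrw, Nat.mul_add_mod, Nat.mod_eq_of_lt hmc.1]
      exact hmc.2.1.symm
    · rw [hβ3 i h2]
      have hli : (x ++ wpow y N ++ z)[i]? = z[i - (x.length + S')]? := by
        rw [List.getElem?_append_right (by rw [hmidlen]; omega), hmidlen]
      have hri : (x ++ y ++ z)[i - l * d]?
          = z[i - l * d - (x.length + y.length)]? := by
        rw [List.getElem?_append_right (by simp [List.length_append]; omega)]
        congr 1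
        simp [List.length_append]
      rw [hli, Nat.add_mul_mod_self_right, ← hFget (i - l * d) (by omega), hri]
      congr 1
      omega
  -- assemble
  have hulen : (x ++ wpow y N ++ z).length = x.length + S' + z.length := by
    simp [List.length_append, wpow_length, hS'def]; omega
  refine ⟨wpow v K' ++ v.take r, ⟨K', rfl⟩, ?_, ?_⟩
  · -- length congruence
    rw [hulen, htlen K']
    have hmodn : ∀ K : ℕ, (K * v.length + r) % d = r % d := by
      intro K
      obtain ⟨c0, hc0⟩ := hv
      rw [hc0, show K * (d * c0) + r = r + (K * c0) * d by ring,
        Nat.add_mul_mod_self_right]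
    have h1 := hlen
    rw [hsrc, htlen k, hmodn k] at h1
    rw [hmodn K']
    rw [show x.length + S' + z.length = (x.length + y.length + z.length) + l * d by omega,
      Nat.add_mul_mod_self_right]
    exact h1
  · refine ⟨fun i => ⟨β i, by rw [htlen K']; exact hβbound i (by rw [← hulen]; exact i.isLt)⟩,
      ?_, ?_, ?_⟩
    · intro i j hij
      have hj : (j : ℕ) < x.length + S' + z.length := by rw [← hulen]; exact j.isLt
      exact hβmono i j hij hj
    · intro i
      have hi : (i : ℕ) < x.length + S' + z.length := by rw [← hulen]; exact i.isLt
      have h1 := hβget i hi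
      have h2 := getq_eq_get i.isLt
      rw [Fin.eta] at h2
      have h3 := getq_eq_get
        (show β i < (wpow v K' ++ v.take r).length by
          rw [htlen K']; exact hβbound i hi)
      rw [h2, h3] at h1
      exact Option.some.inj h1
    · intro i
      have hi : (i : ℕ) < x.length + S' + z.length := by rw [← hulen]; exact i.isLt
      exact hβres i hi
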